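/- Let Γ = (G=(V,E,w), V_Max, V_Min) be a finite mean-payoff game where every vertex has out-degree at least one, let W = max_{e∈E} |w(e)|, and set b = (|V| − 1)·W. Then for every vertex v ∈ V, lb(v) = lwub_b(v), where lb(v) is the minimal initial energy for the lower-bound problem and lwub_b(v) is the minimal initial energy for the lower-weak-upper-bound problem with bound b (both possibly ∞). This relies on the fact that whenever lb(v) < ∞, lb(v) ≤ (|V| − 1)·W. -/

import Mathlib

set_option linter.unusedSectionVars false
set_option maxHeartbeats 1000000



/-- Max has a (history-dependent) strategy ensuring that every infinite play
from `v` consistent with it keeps `x` plus all prefix sums non-negative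
(lower-bound problem). Quantifying over all plays consistent with Max's
strategy captures `∀` over Min's strategies. -/
def EnsLB {V : Type*} [Fintype V] (E : V → V → Prop) (w : V → V → ℤ)
    (VMax : Set V) (v : V) (x : ℕ) : Prop :=
  ∃ σ : List V → V,
    (∀ (l : List V) (u : V), l.getLast? = some u → u ∈ VMax → E u (σ l)) ∧
    ∀ p : ℕ → V, p 0 = v → (∀ i, E (p i) (p (i + 1))) →
      (∀ i, p i ∈ VMax →
        p (i + 1) = σ (List.ofFn (fun j : Fin (i + 1) => p j))) →
      ∀ n : ℕ, 0 ≤ (x : ℤ) + ∑ i ∈ Finset.range n, w (p i) (p (i + 1))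

/-- Same, additionally requiring that no play segment has weight below `-b`
(lower-weak-upper-bound problem). -/
def EnsLWUB {V : Type*} [Fintype V] (E : V → V → Prop) (w : V → V → ℤ)
    (VMax : Set V) (b : ℕ) (v : V) (x : ℕ) : Prop :=
  ∃ σ : List V → V,
    (∀ (l : List V) (u : V), l.getLast? = some u → u ∈ VMax → E u (σ l)) ∧
    ∀ p : ℕ → V, p 0 = v → (∀ i, E (p i) (p (i + 1))) →
      (∀ i, p i ∈ VMax →
        p (i + 1) = σ (List.ofFn (fun j : Fin (i + 1) => p j))) →
      ((∀ n : ℕ, 0 ≤ (x : ℤ) + ∑ i ∈ Finset.range n, w (p i) (p (i + 1))) ∧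
        ∀ n₁ n₂ : ℕ, n₁ < n₂ →
          -(b : ℤ) ≤ ∑ i ∈ Finset.Ico n₁ n₂, w (p i) (p (i + 1)))

/-- `lb(v)`: minimal initial energy for the lower-bound problem (`⊤` = ∞). -/
noncomputable def lbVal {V : Type*} [Fintype V] (E : V → V → Prop)
    (w : V → V → ℤ) (VMax : Set V) (v : V) : ℕ∞ :=
  sInf {x : ℕ∞ | ∃ n : ℕ, x = (n : ℕ∞) ∧ EnsLB E w VMax v n}

/-- `lwub_b(v)`: minimal initial energy for the lower-weak-upper-bound
problem with bound `b` (`⊤` = ∞). -/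
noncomputable def lwubVal {V : Type*} [Fintype V] (E : V → V → Prop)
    (w : V → V → ℤ) (VMax : Set V) (b : ℕ) (v : V) : ℕ∞ :=
  sInf {x : ℕ∞ | ∃ n : ℕ, x = (n : ℕ∞) ∧ EnsLWUB E w VMax b v n}


section Aux
variable {V : Type*} [Fintype V] {E : V → V → Prop} {w : V → V → ℤ} {VMax : Set V}

def Good (E : V → V → Prop) (VMax : Set V) (σ : List V → V) : Prop :=
  ∀ (l : List V) (u : V), l.getLast? = some u → u ∈ VMax → E u (σ l)

def Guar (E : V → V → Prop) (w : V → V → ℤ) (VMax : Set V) (σ : List V → V)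
    (v : V) (c : ℤ) : Prop :=
  ∀ p : ℕ → V, p 0 = v → (∀ i, E (p i) (p (i + 1))) →
    (∀ i, p i ∈ VMax → p (i + 1) = σ (List.ofFn (fun j : Fin (i + 1) => p j))) →
    ∀ n : ℕ, 0 ≤ c + ∑ i ∈ Finset.range n, w (p i) (p (i + 1))

lemma guar_mono {σ : List V → V} {v : V} {c c' : ℤ} (h : c ≤ c')
    (hG : Guar E w VMax σ v c) : Guar E w VMax σ v c' := by
  intro p h0 hEp hC m
  have := hG p h0 hEp hC m
  linarith

lemma getLast?_ofFn_succ {k : ℕ} (f : Fin (k+1) → V) :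
    (List.ofFn f).getLast? = some (f ⟨k, Nat.lt_succ_self k⟩) := by
  have h : (List.ofFn f).length - 1 = k := by simp
  rw [List.getLast?_eq_getElem?, h, List.getElem?_ofFn]
  simp [List.ofFnNthVal]

lemma getLast?_drop {l : List V} {r : ℕ} (h : r < l.length) :
    (l.drop r).getLast? = l.getLast? := by
  rw [List.getLast?_eq_getElem?, List.getLast?_eq_getElem?, List.getElem?_drop]
  have : r + ((l.drop r).length - 1) = l.length - 1 := by
    simp [List.length_drop]; omega
  rw [this]

open Classical in
noncomputable def extPlay (hE : ∀ v : V, ∃ u, E v u) (σ : List V → V) (u : V) : ℕ → V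
  | 0 => u
  | i + 1 =>
    if extPlay hE σ u i ∈ VMax then
      σ (List.ofFn (fun j : Fin (i + 1) => extPlay hE σ u j))
    else (hE (extPlay hE σ u i)).choose

lemma guar_nonneg (hE : ∀ v : V, ∃ u, E v u) {σ : List V → V} {u : V} {c : ℤ}
    (hg : Good E VMax σ) (hG : Guar E w VMax σ u c) : 0 ≤ c := by
  classical
  have h0 : extPlay (VMax := VMax) hE σ u 0 = u := by rw [extPlay]
  have hedge : ∀ i, E (extPlay (VMax := VMax) hE σ u i) (extPlay (VMax := VMax) hE σ u (i+1)) := by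
    intro i
    by_cases h : extPlay (VMax := VMax) hE σ u i ∈ VMax
    · rw [extPlay, if_pos h]
      exact hg _ _ (by rw [getLast?_ofFn_succ]) h
    · rw [extPlay, if_neg h]
      exact (hE _).choose_spec
  have hcons : ∀ i, extPlay (VMax := VMax) hE σ u i ∈ VMax →
      extPlay (VMax := VMax) hE σ u (i+1) = σ (List.ofFn (fun j : Fin (i + 1) => extPlay (VMax := VMax) hE σ u j)) := by
    intro i h
    rw [extPlay, if_pos h]
  have := hG _ h0 hedge hcons 0
  simpa using this

lemma shift {σ : List V → V} {u : V} {c : ℤ}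
    (hg : Good E VMax σ) (hG : Guar E w VMax σ u c) (q : ℕ → V) (N : ℕ)
    (hq0 : q 0 = u) (hqE : ∀ i < N, E (q i) (q (i+1)))
    (hqC : ∀ i < N, q i ∈ VMax → q (i+1) = σ (List.ofFn fun j : Fin (i+1) => q j)) :
    ∃ σ', Good E VMax σ' ∧
      Guar E w VMax σ' (q N) (c + ∑ i ∈ Finset.range N, w (q i) (q (i+1))) := by
  classical
  set pre : List V := List.ofFn (fun j : Fin N => q j) with hpre
  refine ⟨fun l => σ (pre ++ l), ?_, ?_⟩
  · intro l u' hlast hmem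
    have hl : l ≠ [] := by
      intro h; rw [h] at hlast; simp at hlast
    have : (pre ++ l).getLast? = some u' := by
      rw [List.getLast?_append, hlast]; rfl
    exact hg _ _ this hmem
  · intro p' h0 hE' hC' n
    set P : ℕ → V := fun i => if i < N then q i else p' (i - N) with hP
    have hPq : ∀ i ≤ N, P i = q i := by
      intro i hi
      rcases lt_or_eq_of_le hi with h | h
      · simp [hP, h]
      · subst h; simp [hP, h0]
    have hPp : ∀ i, P (N + i) = p' i := by
      intro i
      simp [hP, Nat.not_lt.mpr (Nat.le_add_right N i)]
    have hP0 : P 0 = u := by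
      rcases Nat.eq_zero_or_pos N with h | h
      · subst h; rw [hPp 0, h0, hq0]
      · rw [hPq 0 (Nat.le_of_lt h), hq0]
    have hPE : ∀ i, E (P i) (P (i + 1)) := by
      intro i
      rcases Nat.lt_or_ge i N with h | h
      · rw [hPq i h.le, hPq (i+1) h]
        exact hqE i h
      · obtain ⟨j, rfl⟩ := Nat.exists_eq_add_of_le h
        rw [hPp j, show N + j + 1 = N + (j+1) from rfl, hPp (j+1)]
        exact hE' j
    have hlist : ∀ j : ℕ, N ≤ j →
        List.ofFn (fun t : Fin (j + 1) => P t) =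
          pre ++ List.ofFn (fun t : Fin (j - N + 1) => p' t) := by
      intro j hj
      apply List.ext_getElem
      · simp [hpre]; omega
      · intro m hm1 hm2
        simp only [List.getElem_ofFn]
        rw [List.getElem_append]
        split_ifs with h'
        · have : m < N := by simpa [hpre] using h'
          simp only [hpre, List.getElem_ofFn]
          exact (hPq m this.le).symm ▸ rfl
        · have hmN : N ≤ m := by simpa [hpre] using h'
          simp only [List.getElem_ofFn]
          show P m = p' (m - pre.length)
          have hlen : pre.length = N := by simp [hpre]
          rw [hlen]
          have := hPp (m - N)
          rwa [Nat.add_sub_cancel' hmN] at this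
    have hPC : ∀ i, P i ∈ VMax → P (i + 1) = σ (List.ofFn (fun j : Fin (i + 1) => P j)) := by
      intro i hmem
      rcases Nat.lt_or_ge i N with h | h
      · have hq : List.ofFn (fun j : Fin (i + 1) => P j) = List.ofFn (fun j : Fin (i+1) => q j) := by
          congr 1; funext j
          exact hPq j (by omega)
        rw [hPq (i+1) h, hq]
        rw [hPq i h.le] at hmem
        exact hqC i h hmem
      · have hPi : P i = p' (i - N) := by
          have := hPp (i - N); rwa [Nat.add_sub_cancel' h] at this
        have hPi1 : P (i + 1) = p' (i - N + 1) := by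
          have := hPp (i - N + 1)
          rwa [show N + (i - N + 1) = i + 1 by omega] at this
        rw [hPi] at hmem
        rw [hPi1, hC' (i - N) hmem, hlist i h]
    have hfin := hG P hP0 hPE hPC (N + n)
    rw [Finset.sum_range_add] at hfin
    have e1 : ∑ i ∈ Finset.range N, w (P i) (P (i + 1)) =
        ∑ i ∈ Finset.range N, w (q i) (q (i + 1)) := by
      apply Finset.sum_congr rfl
      intro i hi
      rw [Finset.mem_range] at hi
      rw [hPq i hi.le, hPq (i+1) hi]
    have e2 : ∑ i ∈ Finset.range n, w (P (N + i)) (P (N + i + 1)) =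
        ∑ i ∈ Finset.range n, w (p' i) (p' (i + 1)) := by
      apply Finset.sum_congr rfl
      intro i _
      rw [hPp i, show N + i + 1 = N + (i + 1) from rfl, hPp (i+1)]
    rw [e1, e2] at hfin
    linarith

def pathSum (w : V → V → ℤ) : List V → ℤ
  | a :: b :: t => w a b + pathSum w (b :: t)
  | _ => 0

lemma pathSum_ofFn (w : V → V → ℤ) (m : ℕ) (f : ℕ → V) :
    pathSum w (List.ofFn fun j : Fin (m+1) => f j) =
      ∑ i ∈ Finset.range m, w (f i) (f (i+1)) := by
  induction m generalizing f with
  | zero => simp [List.ofFn_succ, pathSum]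
  | succ m ih =>
    have h1 : (List.ofFn fun j : Fin (m+2) => f j) =
        f 0 :: List.ofFn (fun j : Fin (m+1) => f (j+1)) := by
      rw [List.ofFn_succ]
      congr 1
    have h2 : (List.ofFn fun j : Fin (m+1) => f (j+1)) =
        f 1 :: List.ofFn (fun j : Fin m => f (j+2)) := by
      rw [List.ofFn_succ]
      congr 1
    rw [h1, h2, pathSum, ← h2, ih (fun i => f (i+1)), Finset.sum_range_succ']
    ring_nf

def rIdx (nZ bZ : ℤ) (w : V → V → ℤ) (l : List V) : ℕ :=
  if h : l.length ≤ 1 then 0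
  else
    let r := rIdx nZ bZ w l.dropLast
    if bZ ≤ (if r = 0 then nZ else bZ) + pathSum w (l.drop r) then l.length - 1 else r
termination_by l.length
decreasing_by simp [List.length_dropLast]; omega

lemma rIdx_le (nZ bZ : ℤ) (w : V → V → ℤ) :
    ∀ (k : ℕ) (l : List V), l.length ≤ k → rIdx nZ bZ w l ≤ l.length - 1 := by
  intro k
  induction k with
  | zero =>
    intro l hl
    rw [rIdx]
    simp_all
  | succ k ih =>
    intro l hl
    rw [rIdx]
    split_ifs with h1
    · omega
    · dsimp only
      have := ih l.dropLast (by simp; omega)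
      simp only [List.length_dropLast] at this
      split_ifs <;> omega

open Classical in
noncomputable def vstrat (hE : ∀ v : V, ∃ u, E v u) (w : V → V → ℤ) (VMax : Set V)
    (b : ℤ) (u : V) : List V → V :=
  if h : ∃ σ, Good E VMax σ ∧ Guar E w VMax σ u b then h.choose
  else fun l => (hE ((l.getLast?).getD u)).choose

lemma vstrat_good (hE : ∀ v : V, ∃ u, E v u) (b : ℤ) (u : V) :
    Good E VMax (vstrat hE w VMax b u) := by
  rw [vstrat]
  split_ifs with h
  · exact h.choose_spec.1
  · intro l u' hlast hmem
    simp only [hlast]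
    exact (hE u').choose_spec

lemma vstrat_guar (hE : ∀ v : V, ∃ u, E v u) {b : ℤ} {u : V}
    (h : ∃ σ, Good E VMax σ ∧ Guar E w VMax σ u b) :
    Guar E w VMax (vstrat hE w VMax b u) u b := by
  rw [vstrat, dif_pos h]
  exact h.choose_spec.2

end Aux

section Main
variable {V : Type*} [Fintype V] {E : V → V → Prop} {w : V → V → ℤ} {VMax : Set V}

lemma main_construction (hE : ∀ v : V, ∃ u, E v u) (n b : ℕ) (hnb : n ≤ b) (v : V)
    (σ₀ : List V → V) (h0 : Good E VMax σ₀) (hG0 : Guar E w VMax σ₀ v (n : ℤ))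
    (hfin : ∀ u : V, (∃ c : ℤ, ∃ σ, Good E VMax σ ∧ Guar E w VMax σ u c) →
      ∃ σ, Good E VMax σ ∧ Guar E w VMax σ u (b : ℤ)) :
    ∃ σ : List V → V,
      (∀ (l : List V) (u : V), l.getLast? = some u → u ∈ VMax → E u (σ l)) ∧
      ∀ p : ℕ → V, p 0 = v → (∀ i, E (p i) (p (i + 1))) →
        (∀ i, p i ∈ VMax →
          p (i + 1) = σ (List.ofFn (fun j : Fin (i + 1) => p j))) →
        ((∀ m : ℕ, 0 ≤ (n : ℤ) + ∑ i ∈ Finset.range m, w (p i) (p (i + 1))) ∧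
          ∀ n₁ n₂ : ℕ, n₁ < n₂ →
            -(b : ℤ) ≤ ∑ i ∈ Finset.Ico n₁ n₂, w (p i) (p (i + 1))) := by
  classical
  set σp : List V → V := fun l =>
    if rIdx (n : ℤ) (b : ℤ) w l = 0 then σ₀ l
    else vstrat hE w VMax (b : ℤ) (l.getD (rIdx (n : ℤ) (b : ℤ) w l) v)
      (l.drop (rIdx (n : ℤ) (b : ℤ) w l)) with hσp
  refine ⟨σp, ?_, ?_⟩
  · -- Goodness of σp
    intro l u hlast hmem
    by_cases hr : rIdx (n : ℤ) (b : ℤ) w l = 0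
    · rw [hσp]; dsimp only; rw [if_pos hr]; exact h0 l u hlast hmem
    · have hlne : l ≠ [] := by intro h; rw [h] at hlast; simp at hlast
      have hpos : 0 < l.length := List.length_pos_iff.mpr hlne
      have hlt : rIdx (n : ℤ) (b : ℤ) w l < l.length := by
        have := rIdx_le (n : ℤ) (b : ℤ) w l.length l le_rfl
        omega
      rw [hσp]; dsimp only; rw [if_neg hr]
      exact vstrat_good hE _ _ _ u (by rw [getLast?_drop hlt]; exact hlast) hmem
  · intro p hp0 hpE hpC
    set S : ℕ → ℤ := fun k => ∑ i ∈ Finset.range k, w (p i) (p (i + 1)) with hS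
    set hist : ℕ → List V := fun k => List.ofFn fun j : Fin (k + 1) => p j with hhist
    set R : ℕ → ℕ := fun k => rIdx (n : ℤ) (b : ℤ) w (hist k) with hRdef
    set base : ℕ → ℤ := fun r => if r = 0 then (n : ℤ) else (b : ℤ) with hbase
    have hlen : ∀ k, (hist k).length = k + 1 := by intro k; simp [hhist]
    have hhist' : ∀ i : ℕ, List.ofFn (fun j : Fin (i + 1) => p j) = hist i := fun i => rfl
    have hdropLast : ∀ k, (hist (k + 1)).dropLast = hist k := by
      intro k
      apply List.ext_getElem
      · simp [hhist]
      · intro m h1 h2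
        rw [List.getElem_dropLast]
        simp only [hhist, List.getElem_ofFn]
    have hRle : ∀ k, R k ≤ k := by
      intro k
      have := rIdx_le (n : ℤ) (b : ℤ) w ((hist k).length) (hist k) le_rfl
      rw [hlen] at this
      simpa using this
    have hdrop : ∀ k r, r ≤ k →
        (hist k).drop r = List.ofFn fun j : Fin (k - r + 1) => p (r + j) := by
      intro k r hr
      apply List.ext_getElem
      · simp [hhist]; omega
      · intro m h1 h2
        rw [List.getElem_drop]
        simp only [hhist, List.getElem_ofFn]
    have hgetD : ∀ k r, r ≤ k → (hist k).getD r v = p r := by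
      intro k r hr
      have hlt : r < (hist k).length := by rw [hlen]; omega
      rw [List.getD_eq_getElem _ _ hlt]
      simp only [hhist, List.getElem_ofFn]
    have hsum : ∀ r N : ℕ,
        ∑ i ∈ Finset.range N, w (p (r + i)) (p (r + i + 1)) = S (r + N) - S r := by
      intro r N
      show _ = (∑ i ∈ Finset.range (r + N), w (p i) (p (i + 1))) -
        ∑ i ∈ Finset.range r, w (p i) (p (i + 1))
      rw [← Finset.sum_Ico_eq_sub _ (Nat.le_add_right r N), Finset.sum_Ico_eq_sum_range]
      simp
    have hpath : ∀ k r, r ≤ k → pathSum w ((hist k).drop r) = S k - S r := by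
      intro k r hr
      rw [hdrop k r hr, pathSum_ofFn w (k - r) (fun i => p (r + i))]
      have := hsum r (k - r)
      rw [Nat.add_sub_cancel' hr] at this
      exact this
    have hR0 : R 0 = 0 := by
      show rIdx (n : ℤ) (b : ℤ) w (hist 0) = 0
      rw [rIdx, dif_pos (by rw [hlen])]
    have hRrec : ∀ k, R (k + 1) =
        if (b : ℤ) ≤ base (R k) + (S (k + 1) - S (R k)) then k + 1 else R k := by
      intro k
      have hRk : rIdx (n : ℤ) (b : ℤ) w (hist k) = R k := rfl
      have hRlek : rIdx (n : ℤ) (b : ℤ) w (hist k) ≤ k := by rw [hRk]; exact hRle k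
      show rIdx (n : ℤ) (b : ℤ) w (hist (k + 1)) = _
      rw [rIdx, dif_neg (by rw [hlen]; omega)]
      dsimp only
      rw [hdropLast k, hRk, hpath (k + 1) (R k) (by have := hRle k; omega), hlen]
      simp only [hbase]
      split_ifs <;> omega
    set Sg : ℕ → List V → V := fun r =>
      if r = 0 then σ₀ else vstrat hE w VMax (b : ℤ) (p r) with hSg
    have hSggood : ∀ r, Good E VMax (Sg r) := by
      intro r
      rw [hSg]; dsimp only
      split_ifs
      · exact h0
      · exact vstrat_good hE _ _
    have hcons : ∀ i, p i ∈ VMax →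
        p (i + 1) = Sg (R i) (List.ofFn fun j : Fin (i - R i + 1) => p (R i + j)) := by
      intro i hm
      rw [hpC i hm, hhist' i, hσp]
      dsimp only
      have hRi : rIdx (n : ℤ) (b : ℤ) w (hist i) = R i := rfl
      rw [hRi, hSg]
      dsimp only
      by_cases h2 : R i = 0
      · rw [if_pos h2, if_pos h2, h2]
        congr 1
        apply List.ext_getElem
        · simp [hhist]
        · intro m h1' h2'
          simp only [hhist, List.getElem_ofFn]
          congr 1
          omega
      · rw [if_neg h2, if_neg h2, hgetD i (R i) (hRle i), hdrop i (R i) (hRle i)]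
    have hsh : ∀ k, (∀ i, R k ≤ i → i ≤ k → R i = R k) →
        Guar E w VMax (Sg (R k)) (p (R k)) (base (R k)) →
        ∀ m, R k ≤ m → m ≤ k + 1 →
        ∃ σ'', Good E VMax σ'' ∧
          Guar E w VMax σ'' (p m) (base (R k) + (S m - S (R k))) := by
      intro k hsame hG m hm1 hm2
      have hq0 : p (R k + 0) = p (R k) := rfl
      have hqE : ∀ i, i < m - R k → E (p (R k + i)) (p (R k + i + 1)) := by
        intro i _; exact hpE (R k + i)
      have hqC : ∀ i, i < m - R k → p (R k + i) ∈ VMax →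
          p (R k + i + 1) = Sg (R k) (List.ofFn fun j : Fin (i + 1) => p (R k + j)) := by
        intro i hi hm'
        have hRri : R (R k + i) = R k := hsame (R k + i) (Nat.le_add_right _ _) (by omega)
        have hc := hcons (R k + i) hm'
        rw [hRri] at hc
        have e : R k + i - R k = i := by omega
        rw [e] at hc
        exact hc
      obtain ⟨σ'', hg'', hG''⟩ := shift (hSggood (R k)) hG (fun j => p (R k + j)) (m - R k) hq0 hqE hqC
      have e1 : R k + (m - R k) = m := by omega
      rw [e1] at hG''
      have e2 : ∑ i ∈ Finset.range (m - R k), w (p (R k + i)) (p (R k + i + 1)) = S m - S (R k) := by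
        have := hsum (R k) (m - R k)
        rwa [e1] at this
      refine ⟨σ'', hg'', ?_⟩
      rw [← e2]
      exact hG''
    have key : ∀ k, (∀ i, R k ≤ i → i ≤ k → R i = R k) ∧
        Guar E w VMax (Sg (R k)) (p (R k)) (base (R k)) := by
      intro k
      induction k with
      | zero =>
        constructor
        · intro i h1 h2
          have : i = 0 := Nat.le_antisymm h2 (Nat.zero_le i)
          rw [this]
        · rw [hR0, hp0]
          have h1 : Sg 0 = σ₀ := by simp [hSg]
          have h2 : base 0 = (n : ℤ) := by simp [hbase]
          rw [h1, h2]
          exact hG0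
      | succ k ih =>
        obtain ⟨ihs, ihG⟩ := ih
        by_cases hc : (b : ℤ) ≤ base (R k) + (S (k + 1) - S (R k))
        · have hR1 : R (k + 1) = k + 1 := by rw [hRrec k, if_pos hc]
          constructor
          · intro i h1 h2
            rw [hR1] at h1 ⊢
            have : i = k + 1 := Nat.le_antisymm h2 h1
            rw [this]
            exact hR1
          · rw [hR1]
            have hb1 : base (k + 1) = (b : ℤ) := by rw [hbase]; simp
            have hSg1 : Sg (k + 1) = vstrat hE w VMax (b : ℤ) (p (k + 1)) := by
              rw [hSg]; simp
            rw [hb1, hSg1]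
            apply vstrat_guar hE
            apply hfin
            obtain ⟨σ'', hg'', hG''⟩ := hsh k ihs ihG (k + 1) (by have := hRle k; omega) le_rfl
            exact ⟨_, σ'', hg'', hG''⟩
        · have hR1 : R (k + 1) = R k := by rw [hRrec k, if_neg hc]
          constructor
          · intro i h1 h2
            rw [hR1] at h1 ⊢
            rcases Nat.lt_or_ge i (k + 1) with h | h
            · exact ihs i h1 (by omega)
            · have : i = k + 1 := by omega
              rw [this]
              exact hR1
          · rw [hR1]
            exact ihG
    have hν : ∀ k, 0 ≤ base (R k) + (S k - S (R k)) := by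
      intro k
      obtain ⟨σ'', hg'', hG''⟩ := hsh k (key k).1 (key k).2 k (hRle k) (Nat.le_succ k)
      exact guar_nonneg hE hg'' hG''
    have hU : ∀ k, base (R k) + (S k - S (R k)) ≤ (b : ℤ) := by
      intro k
      cases k with
      | zero =>
        rw [hR0]
        have h2 : base 0 = (n : ℤ) := by simp [hbase]
        rw [h2]
        have : (n : ℤ) ≤ (b : ℤ) := by exact_mod_cast hnb
        linarith
      | succ k =>
        by_cases hc : (b : ℤ) ≤ base (R k) + (S (k + 1) - S (R k))
        · have hR1 : R (k + 1) = k + 1 := by rw [hRrec k, if_pos hc]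
          rw [hR1]
          have hb1 : base (k + 1) = (b : ℤ) := by rw [hbase]; simp
          rw [hb1]
          linarith
        · have hR1 : R (k + 1) = R k := by rw [hRrec k, if_neg hc]
          rw [hR1]
          linarith
    have htel : ∀ k d : ℕ,
        (base (R (k + d)) + (S (k + d) - S (R (k + d)))) -
          (base (R k) + (S k - S (R k))) ≤ S (k + d) - S k := by
      intro k d
      induction d with
      | zero => simp
      | succ d ih =>
        have hstep : (base (R (k + d + 1)) + (S (k + d + 1) - S (R (k + d + 1)))) -
            (base (R (k + d)) + (S (k + d) - S (R (k + d)))) ≤ S (k + d + 1) - S (k + d) := by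
          by_cases hc : (b : ℤ) ≤ base (R (k + d)) + (S (k + d + 1) - S (R (k + d)))
          · have hR1 : R (k + d + 1) = k + d + 1 := by rw [hRrec (k + d), if_pos hc]
            rw [hR1]
            have hb1 : base (k + d + 1) = (b : ℤ) := by rw [hbase]; simp
            rw [hb1]
            linarith
          · have hR1 : R (k + d + 1) = R (k + d) := by rw [hRrec (k + d), if_neg hc]
            rw [hR1]
            linarith
        have : k + (d + 1) = k + d + 1 := rfl
        rw [this]
        linarith
    constructor
    · intro m
      show (0 : ℤ) ≤ (n : ℤ) + S m
      have t := htel 0 m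
      rw [Nat.zero_add] at t
      have h1 := hν m
      have hS0 : S 0 = 0 := by rw [hS]; simp
      have h2 : base (R 0) + (S 0 - S (R 0)) = (n : ℤ) := by
        rw [hR0, hS0]
        have : base 0 = (n : ℤ) := by simp [hbase]
        rw [this]
        ring
      linarith
    · intro n₁ n₂ hlt
      rw [Finset.sum_Ico_eq_sub _ hlt.le]
      show -(b : ℤ) ≤ S n₂ - S n₁
      obtain ⟨d, rfl⟩ := Nat.exists_eq_add_of_le hlt.le
      have t := htel n₁ d
      have h1 := hν (n₁ + d)
      have h2 := hU n₁
      linarith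
end Main

section Glue
variable {V : Type*} [Fintype V] {E : V → V → Prop} {w : V → V → ℤ} {VMax : Set V}

lemma ensLB_iff (v : V) (x : ℕ) :
    EnsLB E w VMax v x ↔ ∃ σ, Good E VMax σ ∧ Guar E w VMax σ v (x : ℤ) := Iff.rfl

lemma ensLB_mono {v : V} {m m' : ℕ} (h : m ≤ m') (hm : EnsLB E w VMax v m) :
    EnsLB E w VMax v m' := by
  obtain ⟨σ, hg, hGu⟩ := hm
  exact ⟨σ, hg, guar_mono (by exact_mod_cast h) hGu⟩

lemma lbVal_le_of_ensLB {v : V} {m : ℕ} (h : EnsLB E w VMax v m) :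
    lbVal E w VMax v ≤ (m : ℕ∞) :=
  sInf_le ⟨m, rfl, h⟩

lemma ensLB_of_lbVal_le {v : V} {m : ℕ} (hne : {x : ℕ∞ | ∃ n : ℕ, x = (n : ℕ∞) ∧ EnsLB E w VMax v n}.Nonempty)
    (h : lbVal E w VMax v ≤ (m : ℕ∞)) : EnsLB E w VMax v m := by
  have hlt : lbVal E w VMax v < (m : ℕ∞) + 1 := by
    refine lt_of_le_of_lt h ?_
    exact_mod_cast Nat.lt_succ_self m
  obtain ⟨a, ha, halt⟩ := sInf_lt_iff.mp hlt
  obtain ⟨k, rfl, hk⟩ := ha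
  have hkm : k ≤ m := by
    have : (k : ℕ∞) < (m : ℕ∞) + 1 := halt
    have : (k : ℕ∞) < ((m + 1 : ℕ) : ℕ∞) := by exact_mod_cast this
    exact_mod_cast Nat.lt_succ_iff.mp (by exact_mod_cast this)
  exact ensLB_mono hkm hk

end Glue

/-- with `b = (|V| - 1)·W`, for every vertex `lb(v) = lwub_b(v)`,
assuming the bound `lb(v) ≤ (|V| - 1)·W` whenever `lb(v)` is finite. -/
theorem stmt_14 {V : Type*} [Fintype V] (E : V → V → Prop) (w : V → V → ℤ)
    (VMax : Set V) (hE : ∀ v : V, ∃ u, E v u)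
    (W : ℕ) (hW : ∀ x y, E x y → (w x y).natAbs ≤ W)
    (hbound : ∀ v : V, lbVal E w VMax v ≠ ⊤ →
      lbVal E w VMax v ≤ (((Fintype.card V - 1) * W : ℕ) : ℕ∞)) :
    ∀ v : V, lbVal E w VMax v = lwubVal E w VMax ((Fintype.card V - 1) * W) v := by
  intro v
  set b : ℕ := (Fintype.card V - 1) * W with hb
  have hsub : lbVal E w VMax v ≤ lwubVal E w VMax b v := by
    apply sInf_le_sInf
    rintro x ⟨m, rfl, σ, hg, hGu⟩
    exact ⟨m, rfl, σ, hg, fun p h0 hEp hC => (hGu p h0 hEp hC).1⟩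
  by_cases htop : lbVal E w VMax v = ⊤
  · exact le_antisymm hsub (htop ▸ le_top)
  · obtain ⟨m, hm⟩ : ∃ m : ℕ, lbVal E w VMax v = (m : ℕ∞) := by
      obtain ⟨a, ha⟩ := WithTop.ne_top_iff_exists.mp htop
      exact ⟨a, ha.symm⟩
    have hne : {x : ℕ∞ | ∃ k : ℕ, x = (k : ℕ∞) ∧ EnsLB E w VMax v k}.Nonempty := by
      by_contra hc
      rw [Set.not_nonempty_iff_eq_empty] at hc
      have : lbVal E w VMax v = ⊤ := by rw [lbVal, hc, sInf_empty]
      exact htop this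
    have hmem : EnsLB E w VMax v m := ensLB_of_lbVal_le hne (le_of_eq hm)
    have hmb : m ≤ b := by
      have := hbound v htop
      rw [hm] at this
      exact_mod_cast this
    have hfin : ∀ u : V, (∃ c : ℤ, ∃ σ, Good E VMax σ ∧ Guar E w VMax σ u c) →
        ∃ σ, Good E VMax σ ∧ Guar E w VMax σ u (b : ℤ) := by
      rintro u ⟨c, σ, hg, hGu⟩
      have h1 : EnsLB E w VMax u c.toNat :=
        ⟨σ, hg, guar_mono (Int.self_le_toNat c) hGu⟩
      have hne' : {x : ℕ∞ | ∃ k : ℕ, x = (k : ℕ∞) ∧ EnsLB E w VMax u k}.Nonempty :=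
        ⟨(c.toNat : ℕ∞), c.toNat, rfl, h1⟩
      have htop' : lbVal E w VMax u ≠ ⊤ := by
        intro h
        have := lbVal_le_of_ensLB h1
        rw [h] at this
        simp at this
      have h2 : lbVal E w VMax u ≤ (b : ℕ∞) := hbound u htop'
      exact (ensLB_of_lbVal_le hne' h2 : EnsLB E w VMax u b)
    obtain ⟨σ₀, h0, hG0⟩ := hmem
    have hmain := main_construction hE m b hmb v σ₀ h0 hG0 hfin
    have hlw : lwubVal E w VMax b v ≤ (m : ℕ∞) := sInf_le ⟨m, rfl, hmain⟩
    exact le_antisymm hsub (by rw [hm]; exact hlw)
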